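/- Let $m \geq 1$, $\boldsymbol{\sigma} \in \{0,1\}^m$, $\boldsymbol{\sigma}^*$ its complement, and fix an $m$-bit $\beta$ with digits $\beta_j$; set $\gamma_j = \beta_j \oplus \sigma_j$. For $u \in \{0, 1\}$, $\sum_{\alpha \in \mathbb{Q}^*(2^m)} (\alpha_{m-u} \oplus \alpha_{m+1-j_1(u)})(\alpha_{m-u} \oplus \alpha_{m+1-j_2(u)}) = 2^{m-u-1}$, and for $u \in \{2, \dots, m-1\}$ this sum equals $2^{m-u-1}\bigl(1 + \sum_{j=1}^{u-1} 2^j ((\gamma_j \oplus 1)\gamma_u + \gamma_j(\gamma_u \oplus 1))\bigr)$, where $j_1, j_2$ are the index functions for shifts $\boldsymbol{\sigma}, \boldsymbol{\sigma}^*$. -/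
import Mathlib


open Finset

/-- Distance to the nearest integer. -/
noncomputable def dnn (x : ℝ) : ℝ := |x - round x|

/-- Real value of a bit. -/
def bitr (b : Bool) : ℝ := if b then 1 else 0

/-- First coordinate of a Hammersley point: t_m/2 + ... + t_1/2^m. -/
noncomputable def hamX (m : ℕ) (t : Fin m → Bool) : ℝ :=
  ∑ j : Fin m, bitr (t j) / 2 ^ (m - j.val)

/-- Second coordinate of a shifted Hammersley point: s_1/2 + ... + s_m/2^m with s_j = t_j ⊕ σ_j. -/
noncomputable def hamY (m : ℕ) (σ t : Fin m → Bool) : ℝ :=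
  ∑ j : Fin m, bitr (xor (t j) (σ j)) / 2 ^ (j.val + 1)

/-- Local discrepancy of the shifted Hammersley point set H_m(σ). -/
noncomputable def Δham (m : ℕ) (σ : Fin m → Bool) (α β : ℝ) : ℝ :=
  ((Finset.univ.filter (fun t : Fin m → Bool => hamX m t < α ∧ hamY m σ t < β)).card : ℝ)
    - 2 ^ m * α * β

/-- digit i (1-based) of an m-digit vector, with value false outside 1..m. -/
def dig (m : ℕ) (a : Fin m → Bool) (i : ℕ) : Bool :=
  if h : 1 ≤ i ∧ i ≤ m then a ⟨i - 1, by omega⟩ else false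

/-- The m-bit real number with binary digits a: ∑ a_j 2^{-j}. -/
noncomputable def mval (m : ℕ) (a : Fin m → Bool) : ℝ :=
  ∑ j : Fin m, bitr (a j) / 2 ^ (j.val + 1)

/-- The index function j(u) associated with digits a of α, digits b of β, and shift τ. -/
def jfun (m : ℕ) (a b τ : Fin m → Bool) (u : ℕ) : ℕ :=
  Nat.findGreatest (fun j => dig m a (m + 1 - j) ≠ xor (dig m b j) (dig m τ j)) u

/-- Smallest m-bit number ≥ α. -/
noncomputable def upm (m : ℕ) (α : ℝ) : ℝ := (⌈2 ^ m * α⌉ : ℝ) / 2 ^ m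

/-- Local discrepancy of the symmetrized Hammersley point set H_m(σ) ∪ H_m(σ*) (multiset union). -/
noncomputable def Δsym (m : ℕ) (σ : Fin m → Bool) (α β : ℝ) : ℝ :=
  (((Finset.univ.filter (fun t : Fin m → Bool => hamX m t < α ∧ hamY m σ t < β)).card : ℝ)
    + ((Finset.univ.filter (fun t : Fin m → Bool =>
        hamX m t < α ∧ hamY m (fun j => !(σ j)) t < β)).card : ℝ))
    - 2 ^ (m + 1) * α * β

@[simp] lemma bitr_true : bitr true = 1 := rfl
@[simp] lemma bitr_false : bitr false = 0 := rfl

lemma dig_coord (m : ℕ) (a : Fin m → Bool) (i : ℕ) (fi : Fin m)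
    (h1 : 1 ≤ i) (h2 : i ≤ m) (h3 : fi.val + 1 = i) : dig m a i = a fi := by
  rw [dig, dif_pos ⟨h1, h2⟩]
  exact congrArg a (Fin.ext (by simp; omega))

lemma dig_oob (m : ℕ) (a : Fin m → Bool) (i : ℕ) (h : m < i) : dig m a i = false := by
  rw [dig, dif_neg]; omega

lemma findGreatest_congr (P Q : ℕ → Prop) [DecidablePred P] [DecidablePred Q] (n : ℕ)
    (h : ∀ k, 1 ≤ k → k ≤ n → (P k ↔ Q k)) :
    Nat.findGreatest P n = Nat.findGreatest Q n := by
  induction n with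
  | zero => rfl
  | succ n ih =>
    have hn := h (n + 1) (by omega) le_rfl
    by_cases hp : P (n + 1)
    · rw [Nat.findGreatest_eq hp, Nat.findGreatest_eq (hn.mp hp)]
    · rw [Nat.findGreatest_of_not hp, Nat.findGreatest_of_not (fun hq => hp (hn.mpr hq)),
        ih (fun k h1 h2 => h k h1 (by omega))]

open Classical in
lemma count_filter_eq (m : ℕ) (S : Finset (Fin m)) (g : Fin m → Bool) :
    (Finset.univ.filter (fun a : Fin m → Bool => ∀ i ∈ S, a i = g i)).card
      = 2 ^ (m - S.card) := by
  classical
  induction S using Finset.induction with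
  | empty =>
      simp only [Finset.notMem_empty, false_implies, implies_true, Finset.filter_true_of_mem,
        Finset.card_univ, Finset.card_empty, Nat.sub_zero]
      simp [Fintype.card_fun]
  | @insert i S hi ih =>
      have hcard : S.card + 1 ≤ m := by
        have := Finset.card_le_univ (insert i S)
        simpa [Finset.card_insert_of_notMem hi] using this
      have hbij : (Finset.univ.filter (fun a : Fin m → Bool => (∀ j ∈ S, a j = g j) ∧ a i = g i)).card
          = (Finset.univ.filter (fun a : Fin m → Bool => (∀ j ∈ S, a j = g j) ∧ ¬(a i = g i))).card := by
        refine Finset.card_bij' (fun a _ => Function.update a i (!(g i)))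
          (fun a _ => Function.update a i (g i)) ?_ ?_ ?_ ?_
        · intro a ha
          simp only [Finset.mem_filter, Finset.mem_univ, true_and] at ha ⊢
          refine ⟨fun j hj => ?_, by simp⟩
          rw [Function.update_of_ne (by rintro rfl; exact hi hj)]
          exact ha.1 j hj
        · intro a ha
          simp only [Finset.mem_filter, Finset.mem_univ, true_and] at ha ⊢
          refine ⟨fun j hj => ?_, by simp⟩
          rw [Function.update_of_ne (by rintro rfl; exact hi hj)]
          exact ha.1 j hj
        · intro a ha
          simp only [Finset.mem_filter, Finset.mem_univ, true_and] at ha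
          funext j
          by_cases hj : j = i
          · subst hj; simp [ha.2]
          · simp [Function.update_of_ne hj]
        · intro a ha
          simp only [Finset.mem_filter, Finset.mem_univ, true_and] at ha
          funext j
          by_cases hj : j = i
          · subst hj
            simp only [Function.update_self]
            cases hgi : g j <;> cases haj : a j <;> simp_all
          · simp [Function.update_of_ne hj]
      have hsplit : (Finset.univ.filter (fun a : Fin m → Bool => (∀ j ∈ S, a j = g j) ∧ a i = g i)).card
          + (Finset.univ.filter (fun a : Fin m → Bool => (∀ j ∈ S, a j = g j) ∧ ¬(a i = g i))).card
          = 2 ^ (m - S.card) := by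
        rw [← ih, ← Finset.card_union_of_disjoint]
        · congr 1
          ext a
          simp only [Finset.mem_union, Finset.mem_filter, Finset.mem_univ, true_and]
          tauto
        · rw [Finset.disjoint_left]
          intro a ha hb
          simp only [Finset.mem_filter, Finset.mem_univ, true_and] at ha hb
          exact hb.2 ha.2
      obtain ⟨k, hk⟩ : ∃ k, k = m - S.card - 1 := ⟨_, rfl⟩
      have e1 : m - S.card = k + 1 := by clear ih hbij hsplit; omega
      have e2 : m - (S.card + 1) = k := by clear ih hbij hsplit; omega
      have hkey : (Finset.univ.filter (fun a : Fin m → Bool => (∀ j ∈ S, a j = g j) ∧ a i = g i)).card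
          = 2 ^ k := by
        refine Nat.eq_of_mul_eq_mul_left (show 0 < 2 by norm_num) ?_
        calc 2 * (Finset.univ.filter (fun a : Fin m → Bool => (∀ j ∈ S, a j = g j) ∧ a i = g i)).card
            = (Finset.univ.filter (fun a : Fin m → Bool => (∀ j ∈ S, a j = g j) ∧ a i = g i)).card
              + (Finset.univ.filter (fun a : Fin m → Bool => (∀ j ∈ S, a j = g j) ∧ ¬(a i = g i))).card := by
              rw [two_mul, hbij]
          _ = 2 ^ (m - S.card) := hsplit
          _ = 2 * 2 ^ k := by rw [e1, pow_succ, Nat.mul_comm]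
      have hfe : (Finset.univ.filter (fun a : Fin m → Bool => ∀ j ∈ insert i S, a j = g j))
          = (Finset.univ.filter (fun a : Fin m → Bool => (∀ j ∈ S, a j = g j) ∧ a i = g i)) :=
        Finset.filter_congr (fun a _ => by
          simp only [Finset.forall_mem_insert]; tauto)
      rw [hfe, hkey, Finset.card_insert_of_notMem hi, e2]

open Classical in
lemma count_interval (m p q : ℕ) (hpq : p ≤ q) (hq : q < m) (g : ℕ → Bool) :
    (Finset.univ.filter (fun a : Fin m → Bool =>
        ∀ i : Fin m, p ≤ i.val → i.val ≤ q → a i = g i.val)).card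
      = 2 ^ (m - (q - p + 1)) := by
  classical
  have hmem : ∀ j ∈ Finset.Icc p q, j < m := fun j hj => by
    simp only [Finset.mem_Icc] at hj; omega
  have h := count_filter_eq m ((Finset.Icc p q).attachFin hmem) (fun i => g i.val)
  have hfe : (Finset.univ.filter (fun a : Fin m → Bool =>
        ∀ i ∈ (Finset.Icc p q).attachFin hmem, a i = g i.val))
      = (Finset.univ.filter (fun a : Fin m → Bool =>
        ∀ i : Fin m, p ≤ i.val → i.val ≤ q → a i = g i.val)) := by
    ext a
    simp only [Finset.mem_filter, Finset.mem_univ, true_and]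
    constructor
    · intro hh i h1 h2
      exact hh i (by rw [Finset.mem_attachFin]; simp only [Finset.mem_Icc]; exact ⟨h1, h2⟩)
    · intro hh i hiM
      rw [Finset.mem_attachFin, Finset.mem_Icc] at hiM
      exact hh i hiM.1 hiM.2
  rw [Finset.card_attachFin, Nat.card_Icc, hfe] at h
  rw [h]
  congr 1
  clear h hfe hmem
  omega

lemma bool_ne_iff {x y : Bool} : x ≠ y ↔ x = !y := by cases x <;> cases y <;> simp

/-- Case condition: with sign pattern δ, the "last agreement at k" event. -/
def CAc (u k : ℕ) (δ qf : ℕ → Bool) (c : Bool) : Prop :=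
  (∀ j, k < j → j ≤ u → qf j = !(δ j)) ∧ (k = 0 → δ u = true) ∧
  (1 ≤ k → qf k = δ k ∧ δ k ≠ δ u) ∧ c = δ u

open Classical in
lemma pointwise (u : ℕ) (hu1 : 1 ≤ u) (γ qf : ℕ → Bool) (hq0 : qf 0 = false) (c : Bool) :
    bitr (xor c (qf (Nat.findGreatest (fun j => qf j ≠ γ j) u)))
      * bitr (xor c (qf (Nat.findGreatest (fun j => qf j = γ j) u)))
    = ∑ k ∈ Finset.range u,
        ((if CAc u k γ qf c then (1:ℝ) else 0)
          + (if CAc u k (fun j => !(γ j)) qf c then 1 else 0)) := by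
  by_cases h : qf u = γ u
  · -- case B: the σ* index is u
    have hn2 : Nat.findGreatest (fun j => qf j = γ j) u = u := Nat.findGreatest_eq h
    have hn1le : Nat.findGreatest (fun j => qf j ≠ γ j) u ≤ u := Nat.findGreatest_le u
    have hn1lt : Nat.findGreatest (fun j => qf j ≠ γ j) u < u := by
      rcases lt_or_eq_of_le hn1le with h' | h'
      · exact h'
      · exact absurd (Nat.findGreatest_of_ne_zero h' (by omega)) (by simp [h])
    set n1 := Nat.findGreatest (fun j => qf j ≠ γ j) u with hn1def
    have hgt : ∀ j, n1 < j → j ≤ u → qf j = γ j := by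
      intro j hj hju
      have := Nat.findGreatest_is_greatest (P := fun j => qf j ≠ γ j) hj hju
      simpa using this
    have hAzero : ∀ k, k < u → ¬ CAc u k γ qf c := by
      rintro k hk ⟨c1, _, _, _⟩
      have := c1 u hk le_rfl
      rw [h] at this
      exact absurd this (by cases γ u <;> simp
      )
    have hBzero : ∀ k, k < u → k ≠ n1 → ¬ CAc u k (fun j => !(γ j)) qf c := by
      rintro k hk hne ⟨c1, c2, c3, c4⟩
      rcases lt_or_gt_of_ne hne with hlt | hgt'
      · -- k < n1, n1 ≥ 1
        have hsp : qf n1 ≠ γ n1 := Nat.findGreatest_of_ne_zero hn1def.symm (by omega)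
        have := c1 n1 hlt (le_of_lt hn1lt)
        simp only [Bool.not_not] at this
        exact hsp this
      · -- k > n1
        have hk1 : 1 ≤ k := by omega
        have h1 := (c3 hk1).1
        have h2 := hgt k hgt' (le_of_lt hk)
        rw [h2] at h1
        simp at h1
    rw [Finset.sum_eq_single_of_mem n1 (Finset.mem_range.mpr hn1lt)
      (fun k hk hne => by
        rw [if_neg (hAzero k (Finset.mem_range.mp hk)),
          if_neg (hBzero k (Finset.mem_range.mp hk) hne)]
        norm_num)]
    rw [if_neg (hAzero n1 hn1lt), hn2, h]
    by_cases hn10 : n1 = 0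
    · have hq : qf n1 = false := by rw [hn10, hq0]
      have hiff : CAc u n1 (fun j => !(γ j)) qf c ↔ ((!(γ u)) = true ∧ c = !(γ u)) := by
        constructor
        · rintro ⟨_, c2, _, c4⟩
          exact ⟨c2 hn10, c4⟩
        · rintro ⟨h1, h2⟩
          refine ⟨fun j hj hju => by rw [hgt j hj hju]; simp, fun _ => h1,
            fun hk1 => absurd hn10 (by omega), h2⟩
      rw [if_congr hiff rfl rfl, hq]
      cases hgu : γ u <;> cases hcv : c <;> simp [bitr]
    · have hsp : qf n1 ≠ γ n1 := Nat.findGreatest_of_ne_zero hn1def.symm hn10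
      have hq : qf n1 = !(γ n1) := bool_ne_iff.mp hsp
      have hiff : CAc u n1 (fun j => !(γ j)) qf c ↔ ((!(γ n1)) ≠ !(γ u) ∧ c = !(γ u)) := by
        constructor
        · rintro ⟨_, _, c3, c4⟩
          exact ⟨(c3 (by omega)).2, c4⟩
        · rintro ⟨h1, h2⟩
          refine ⟨fun j hj hju => by rw [hgt j hj hju]; simp, fun h0 => absurd h0 hn10,
            fun _ => ⟨hq, h1⟩, h2⟩
      rw [if_congr hiff rfl rfl, hq]
      cases hgu : γ u <;> cases hgn : γ n1 <;> cases hcv : c <;> simp [bitr]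
  · -- case A: the σ index is u
    have hPu : qf u ≠ γ u := h
    have hn1 : Nat.findGreatest (fun j => qf j ≠ γ j) u = u := Nat.findGreatest_eq hPu
    have hn2le : Nat.findGreatest (fun j => qf j = γ j) u ≤ u := Nat.findGreatest_le u
    have hn2lt : Nat.findGreatest (fun j => qf j = γ j) u < u := by
      rcases lt_or_eq_of_le hn2le with h' | h'
      · exact h'
      · exact absurd (Nat.findGreatest_of_ne_zero h' (by omega)) h
    set n2 := Nat.findGreatest (fun j => qf j = γ j) u with hn2def
    have hgt : ∀ j, n2 < j → j ≤ u → qf j = !(γ j) := by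
      intro j hj hju
      have := Nat.findGreatest_is_greatest (P := fun j => qf j = γ j) hj hju
      exact bool_ne_iff.mp this
    have hBzero : ∀ k, k < u → ¬ CAc u k (fun j => !(γ j)) qf c := by
      rintro k hk ⟨c1, _, _, _⟩
      have := c1 u hk le_rfl
      simp only [Bool.not_not] at this
      exact h this
    have hAzero : ∀ k, k < u → k ≠ n2 → ¬ CAc u k γ qf c := by
      rintro k hk hne ⟨c1, c2, c3, c4⟩
      rcases lt_or_gt_of_ne hne with hlt | hgt'
      · have hsp : qf n2 = γ n2 := Nat.findGreatest_of_ne_zero hn2def.symm (by omega)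
        have := c1 n2 hlt (le_of_lt hn2lt)
        rw [hsp] at this
        exact absurd this (by cases γ n2 <;> simp)
      · have hk1 : 1 ≤ k := by omega
        have h1 := (c3 hk1).1
        have h2 := hgt k hgt' (le_of_lt hk)
        rw [h2] at h1
        simp at h1
    rw [Finset.sum_eq_single_of_mem n2 (Finset.mem_range.mpr hn2lt)
      (fun k hk hne => by
        rw [if_neg (hAzero k (Finset.mem_range.mp hk) hne),
          if_neg (hBzero k (Finset.mem_range.mp hk))]
        norm_num)]
    rw [if_neg (hBzero n2 hn2lt), hn1]
    have hqu : qf u = !(γ u) := bool_ne_iff.mp h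
    rw [hqu]
    by_cases hn20 : n2 = 0
    · have hq : qf n2 = false := by rw [hn20, hq0]
      have hiff : CAc u n2 γ qf c ↔ (γ u = true ∧ c = γ u) := by
        constructor
        · rintro ⟨_, c2, _, c4⟩
          exact ⟨c2 hn20, c4⟩
        · rintro ⟨h1, h2⟩
          exact ⟨fun j hj hju => hgt j hj hju, fun _ => h1,
            fun hk1 => absurd hn20 (by omega), h2⟩
      rw [if_congr hiff rfl rfl, hq]
      cases hgu : γ u <;> cases hcv : c <;> simp [bitr]
    · have hsp : qf n2 = γ n2 := Nat.findGreatest_of_ne_zero hn2def.symm hn20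
      have hiff : CAc u n2 γ qf c ↔ (γ n2 ≠ γ u ∧ c = γ u) := by
        constructor
        · rintro ⟨_, _, c3, c4⟩
          exact ⟨(c3 (by omega)).2, c4⟩
        · rintro ⟨h1, h2⟩
          exact ⟨fun j hj hju => hgt j hj hju, fun h0 => absurd h0 hn20,
            fun _ => ⟨hsp, h1⟩, h2⟩
      rw [if_congr hiff rfl rfl, hsp]
      cases hgu : γ u <;> cases hgn : γ n2 <;> cases hcv : c <;> simp [bitr]

open Classical in
lemma sumCA (m u k : ℕ) (hk : k < u) (hum : u + 1 ≤ m) (δ : ℕ → Bool) :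
    ∑ a : Fin m → Bool,
        (if CAc u k δ (fun j => dig m a (m + 1 - j)) (dig m a (m - u)) then (1:ℝ) else 0)
      = if k = 0 then (if δ u = true then (2:ℝ) ^ (m - u - 1) else 0)
        else (if δ k ≠ δ u then (2:ℝ) ^ (m - (u + 2 - k)) else 0) := by
  rcases Nat.eq_zero_or_pos k with hk0 | hk1
  · subst hk0
    rw [if_pos rfl]
    set g : ℕ → Bool := fun i => if i = m - u - 1 then δ u else !(δ (m - i)) with hg
    have hiffa : ∀ a : Fin m → Bool,
        (CAc u 0 δ (fun j => dig m a (m + 1 - j)) (dig m a (m - u))) ↔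
        (δ u = true ∧ ∀ i : Fin m, m - u - 1 ≤ i.val → i.val ≤ m - 1 → a i = g i.val) := by
      intro a
      constructor
      · rintro ⟨c1, c2, -, c4⟩
        refine ⟨c2 rfl, fun i h1 h2 => ?_⟩
        by_cases hi : i.val = m - u - 1
        · have hd : dig m a (m - u) = a i := dig_coord m a (m - u) i (by omega) (by omega) (by omega)
          rw [← hd, c4]
          show δ u = if i.val = m - u - 1 then δ u else !(δ (m - i.val))
          rw [if_pos hi]
        · have hc : dig m a (m + 1 - (m - i.val)) = !(δ (m - i.val)) := c1 (m - i.val) (by omega) (by omega)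
          have hd : dig m a (m + 1 - (m - i.val)) = a i :=
            dig_coord m a _ i (by omega) (by omega) (by omega)
          rw [← hd, hc]
          show (!(δ (m - i.val))) = (if i.val = m - u - 1 then δ u else !(δ (m - i.val)))
          rw [if_neg hi]
      · rintro ⟨h1, h2⟩
        refine ⟨?_, fun _ => h1, fun h' => absurd h' (by omega), ?_⟩
        · intro j hj0 hju
          show dig m a (m + 1 - j) = !(δ j)
          have hd : dig m a (m + 1 - j) = a ⟨m - j, by omega⟩ :=
            dig_coord m a _ _ (by omega) (by omega) (by show m - j + 1 = m + 1 - j; omega)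
          rw [hd, h2 ⟨m - j, by omega⟩ (show m - u - 1 ≤ m - j by omega) (show m - j ≤ m - 1 by omega)]
          show (if m - j = m - u - 1 then δ u else !(δ (m - (m - j)))) = !(δ j)
          rw [if_neg (by omega), show m - (m - j) = j from by omega]
        · have hd : dig m a (m - u) = a ⟨m - u - 1, by omega⟩ :=
            dig_coord m a _ _ (by omega) (by omega) (by show m - u - 1 + 1 = m - u; omega)
          rw [hd, h2 ⟨m - u - 1, by omega⟩ (show m - u - 1 ≤ m - u - 1 from le_rfl)
            (show m - u - 1 ≤ m - 1 by omega)]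
          show (if m - u - 1 = m - u - 1 then δ u else !(δ (m - (m - u - 1)))) = δ u
          rw [if_pos rfl]
    by_cases hδ : δ u = true
    · rw [if_pos hδ]
      calc ∑ a : Fin m → Bool,
            (if CAc u 0 δ (fun j => dig m a (m + 1 - j)) (dig m a (m - u)) then (1:ℝ) else 0)
          = ∑ a : Fin m → Bool,
            (if (∀ i : Fin m, m - u - 1 ≤ i.val → i.val ≤ m - 1 → a i = g i.val) then (1:ℝ) else 0) :=
            Finset.sum_congr rfl (fun a _ => by
              rw [if_congr ((hiffa a).trans (and_iff_right hδ)) rfl rfl])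
        _ = ((Finset.univ.filter (fun a : Fin m → Bool =>
              ∀ i : Fin m, m - u - 1 ≤ i.val → i.val ≤ m - 1 → a i = g i.val)).card : ℝ) := by
            rw [Finset.sum_boole]
        _ = (2:ℝ) ^ (m - u - 1) := by
            rw [count_interval m (m - u - 1) (m - 1) (by omega) (by omega) g,
              show m - ((m - 1) - (m - u - 1) + 1) = m - u - 1 from by omega]
            push_cast
            ring
    · rw [if_neg hδ]
      calc ∑ a : Fin m → Bool,
            (if CAc u 0 δ (fun j => dig m a (m + 1 - j)) (dig m a (m - u)) then (1:ℝ) else 0)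
          = ∑ _a : Fin m → Bool, (0:ℝ) :=
            Finset.sum_congr rfl (fun a _ => if_neg (fun hc => hδ ((hiffa a).mp hc).1))
        _ = 0 := by simp
  · rw [if_neg (by omega)]
    set g : ℕ → Bool := fun i =>
      if i = m - u - 1 then δ u else if i = m - k then δ k else !(δ (m - i)) with hg
    have hiffa : ∀ a : Fin m → Bool,
        (CAc u k δ (fun j => dig m a (m + 1 - j)) (dig m a (m - u))) ↔
        ((δ k ≠ δ u) ∧ ∀ i : Fin m, m - u - 1 ≤ i.val → i.val ≤ m - k → a i = g i.val) := by
      intro a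
      constructor
      · rintro ⟨c1, -, c3, c4⟩
        have c3a : dig m a (m + 1 - k) = δ k := (c3 hk1).1
        have c3b : δ k ≠ δ u := (c3 hk1).2
        refine ⟨c3b, fun i h1 h2 => ?_⟩
        by_cases hi : i.val = m - u - 1
        · have hd : dig m a (m - u) = a i := dig_coord m a (m - u) i (by omega) (by omega) (by omega)
          rw [← hd, c4]
          show δ u = if i.val = m - u - 1 then δ u else if i.val = m - k then δ k else !(δ (m - i.val))
          rw [if_pos hi]
        · by_cases hik : i.val = m - k
          · have hd : dig m a (m + 1 - k) = a i :=
              dig_coord m a _ i (by omega) (by omega) (by omega)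
            rw [← hd, c3a]
            show δ k = if i.val = m - u - 1 then δ u else if i.val = m - k then δ k else !(δ (m - i.val))
            rw [if_neg hi, if_pos hik]
          · have hc : dig m a (m + 1 - (m - i.val)) = !(δ (m - i.val)) :=
              c1 (m - i.val) (by omega) (by omega)
            have hd : dig m a (m + 1 - (m - i.val)) = a i :=
              dig_coord m a _ i (by omega) (by omega) (by omega)
            rw [← hd, hc]
            show (!(δ (m - i.val))) = (if i.val = m - u - 1 then δ u else if i.val = m - k then δ k else !(δ (m - i.val)))
            rw [if_neg hi, if_neg hik]
      · rintro ⟨h1, h2⟩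
        refine ⟨?_, fun h0 => absurd h0 (by omega), fun _ => ⟨?_, h1⟩, ?_⟩
        · intro j hj0 hju
          show dig m a (m + 1 - j) = !(δ j)
          have hd : dig m a (m + 1 - j) = a ⟨m - j, by omega⟩ :=
            dig_coord m a _ _ (by omega) (by omega) (by show m - j + 1 = m + 1 - j; omega)
          rw [hd, h2 ⟨m - j, by omega⟩ (show m - u - 1 ≤ m - j by omega) (show m - j ≤ m - k by omega)]
          show (if m - j = m - u - 1 then δ u else if m - j = m - k then δ k else !(δ (m - (m - j)))) = !(δ j)
          rw [if_neg (by omega), if_neg (by omega), show m - (m - j) = j from by omega]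
        · show dig m a (m + 1 - k) = δ k
          have hd : dig m a (m + 1 - k) = a ⟨m - k, by omega⟩ :=
            dig_coord m a _ _ (by omega) (by omega) (by show m - k + 1 = m + 1 - k; omega)
          rw [hd, h2 ⟨m - k, by omega⟩ (show m - u - 1 ≤ m - k by omega) (show m - k ≤ m - k from le_rfl)]
          show (if m - k = m - u - 1 then δ u else if m - k = m - k then δ k else !(δ (m - (m - k)))) = δ k
          rw [if_neg (by omega), if_pos rfl]
        · have hd : dig m a (m - u) = a ⟨m - u - 1, by omega⟩ :=
            dig_coord m a _ _ (by omega) (by omega) (by show m - u - 1 + 1 = m - u; omega)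
          rw [hd, h2 ⟨m - u - 1, by omega⟩ (show m - u - 1 ≤ m - u - 1 from le_rfl)
            (show m - u - 1 ≤ m - k by omega)]
          show (if m - u - 1 = m - u - 1 then δ u else if m - u - 1 = m - k then δ k else !(δ (m - (m - u - 1)))) = δ u
          rw [if_pos rfl]
    by_cases hδ : δ k ≠ δ u
    · rw [if_pos hδ]
      calc ∑ a : Fin m → Bool,
            (if CAc u k δ (fun j => dig m a (m + 1 - j)) (dig m a (m - u)) then (1:ℝ) else 0)
          = ∑ a : Fin m → Bool,
            (if (∀ i : Fin m, m - u - 1 ≤ i.val → i.val ≤ m - k → a i = g i.val) then (1:ℝ) else 0) :=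
            Finset.sum_congr rfl (fun a _ => by
              rw [if_congr ((hiffa a).trans (and_iff_right hδ)) rfl rfl])
        _ = ((Finset.univ.filter (fun a : Fin m → Bool =>
              ∀ i : Fin m, m - u - 1 ≤ i.val → i.val ≤ m - k → a i = g i.val)).card : ℝ) := by
            rw [Finset.sum_boole]
        _ = (2:ℝ) ^ (m - (u + 2 - k)) := by
            rw [count_interval m (m - u - 1) (m - k) (by omega) (by omega) g,
              show m - ((m - k) - (m - u - 1) + 1) = m - (u + 2 - k) from by omega]
            push_cast
            ring
    · rw [if_neg hδ]
      calc ∑ a : Fin m → Bool,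
            (if CAc u k δ (fun j => dig m a (m + 1 - j)) (dig m a (m - u)) then (1:ℝ) else 0)
          = ∑ _a : Fin m → Bool, (0:ℝ) :=
            Finset.sum_congr rfl (fun a _ => if_neg (fun hc => hδ ((hiffa a).mp hc).1))
        _ = 0 := by simp

open Classical in
lemma main_count (m : ℕ) (σ b : Fin m → Bool) (u : ℕ) (hu1 : 1 ≤ u) (hum : u + 1 ≤ m) :
    ∑ a : Fin m → Bool,
        bitr (xor (dig m a (m - u)) (dig m a (m + 1 - jfun m a b σ u)))
          * bitr (xor (dig m a (m - u)) (dig m a (m + 1 - jfun m a b (fun j => !(σ j)) u)))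
      = (2:ℝ) ^ (m - u - 1) * (1 + ∑ j ∈ Finset.Icc 1 (u - 1), (2:ℝ) ^ j *
          (if xor (dig m b j) (dig m σ j) ≠ xor (dig m b u) (dig m σ u) then 1 else 0)) := by
  have hjfun2 : ∀ a : Fin m → Bool, jfun m a b (fun j => !(σ j)) u
      = Nat.findGreatest (fun j => dig m a (m + 1 - j) = xor (dig m b j) (dig m σ j)) u := by
    intro a
    apply findGreatest_congr
    intro k h1 h2
    have hσ : dig m (fun j => !(σ j)) k = !(dig m σ k) := by
      rw [dig, dig, dif_pos ⟨h1, by omega⟩, dif_pos ⟨h1, by omega⟩]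
    rw [hσ]
    cases dig m a (m + 1 - k) <;> cases dig m b k <;> cases dig m σ k <;> simp
  calc ∑ a : Fin m → Bool,
        bitr (xor (dig m a (m - u)) (dig m a (m + 1 - jfun m a b σ u)))
          * bitr (xor (dig m a (m - u)) (dig m a (m + 1 - jfun m a b (fun j => !(σ j)) u)))
      = ∑ a : Fin m → Bool, ∑ k ∈ Finset.range u,
          ((if CAc u k (fun j => xor (dig m b j) (dig m σ j))
              (fun j => dig m a (m + 1 - j)) (dig m a (m - u)) then (1:ℝ) else 0)
            + (if CAc u k (fun j => !(xor (dig m b j) (dig m σ j)))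
              (fun j => dig m a (m + 1 - j)) (dig m a (m - u)) then 1 else 0)) := by
        refine Finset.sum_congr rfl (fun a _ => ?_)
        rw [hjfun2 a]
        exact pointwise u hu1 (fun j => xor (dig m b j) (dig m σ j))
          (fun j => dig m a (m + 1 - j)) (dig_oob m a (m + 1) (by omega)) (dig m a (m - u))
    _ = ∑ k ∈ Finset.range u,
          ((if k = 0 then (if xor (dig m b u) (dig m σ u) = true then (2:ℝ) ^ (m - u - 1) else 0)
            else (if xor (dig m b k) (dig m σ k) ≠ xor (dig m b u) (dig m σ u)
              then (2:ℝ) ^ (m - (u + 2 - k)) else 0))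
          + (if k = 0 then (if (!(xor (dig m b u) (dig m σ u))) = true then (2:ℝ) ^ (m - u - 1) else 0)
            else (if (!(xor (dig m b k) (dig m σ k))) ≠ (!(xor (dig m b u) (dig m σ u)))
              then (2:ℝ) ^ (m - (u + 2 - k)) else 0))) := by
        rw [Finset.sum_comm]
        refine Finset.sum_congr rfl (fun k hk => ?_)
        rw [Finset.sum_add_distrib,
          sumCA m u k (Finset.mem_range.mp hk) hum (fun j => xor (dig m b j) (dig m σ j)),
          sumCA m u k (Finset.mem_range.mp hk) hum (fun j => !(xor (dig m b j) (dig m σ j)))]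
    _ = (2:ℝ) ^ (m - u - 1) * (1 + ∑ j ∈ Finset.Icc 1 (u - 1), (2:ℝ) ^ j *
          (if xor (dig m b j) (dig m σ j) ≠ xor (dig m b u) (dig m σ u) then 1 else 0)) := by
        rw [Finset.range_eq_Ico, Finset.sum_eq_sum_Ico_succ_bot (by omega : 0 < u)]
        have h0 : ((if (0:ℕ) = 0 then (if xor (dig m b u) (dig m σ u) = true then (2:ℝ) ^ (m - u - 1) else 0)
            else (if xor (dig m b 0) (dig m σ 0) ≠ xor (dig m b u) (dig m σ u)
              then (2:ℝ) ^ (m - (u + 2 - 0)) else 0))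
          + (if (0:ℕ) = 0 then (if (!(xor (dig m b u) (dig m σ u))) = true then (2:ℝ) ^ (m - u - 1) else 0)
            else (if (!(xor (dig m b 0) (dig m σ 0))) ≠ (!(xor (dig m b u) (dig m σ u)))
              then (2:ℝ) ^ (m - (u + 2 - 0)) else 0))) = (2:ℝ) ^ (m - u - 1) := by
          cases hgu : xor (dig m b u) (dig m σ u) <;> simp
        rw [h0]
        have hIco : Finset.Ico 1 u = Finset.Icc 1 (u - 1) := by
          rw [← Finset.Ico_add_one_right_eq_Icc]
          congr 1
          omega
        have hterm : ∀ k ∈ Finset.Ico 1 u,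
            ((if k = 0 then (if xor (dig m b u) (dig m σ u) = true then (2:ℝ) ^ (m - u - 1) else 0)
              else (if xor (dig m b k) (dig m σ k) ≠ xor (dig m b u) (dig m σ u)
                then (2:ℝ) ^ (m - (u + 2 - k)) else 0))
            + (if k = 0 then (if (!(xor (dig m b u) (dig m σ u))) = true then (2:ℝ) ^ (m - u - 1) else 0)
              else (if (!(xor (dig m b k) (dig m σ k))) ≠ (!(xor (dig m b u) (dig m σ u)))
                then (2:ℝ) ^ (m - (u + 2 - k)) else 0)))
            = (2:ℝ) ^ (m - u - 1) * ((2:ℝ) ^ k *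
                (if xor (dig m b k) (dig m σ k) ≠ xor (dig m b u) (dig m σ u) then 1 else 0)) := by
          intro k hk
          rw [Finset.mem_Ico] at hk
          have hk0 : k ≠ 0 := by omega
          rw [if_neg hk0, if_neg hk0]
          have hpow : (2:ℝ) ^ (m - (u + 2 - k)) + (2:ℝ) ^ (m - (u + 2 - k))
              = (2:ℝ) ^ (m - u - 1) * (2:ℝ) ^ k := by
            rw [← pow_add, show m - u - 1 + k = m - (u + 2 - k) + 1 from by omega, pow_succ]
            ring
          by_cases hne : xor (dig m b k) (dig m σ k) ≠ xor (dig m b u) (dig m σ u)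
          · rw [if_pos hne, if_pos (by simp [bne] at hne ⊢; exact fun hh => hne (by
              cases hx : xor (dig m b k) (dig m σ k) <;> cases hy : xor (dig m b u) (dig m σ u) <;>
                simp_all)), if_pos hne]
            rw [mul_one, hpow]
          · rw [if_neg hne, if_neg (by
              intro hh
              apply hne
              intro heq
              rw [heq] at hh
              exact hh rfl), if_neg hne]
            ring
        rw [Finset.sum_congr rfl hterm, ← Finset.mul_sum, hIco]
        ring

theorem stmt7 (m : ℕ) (hm : 1 ≤ m) (σ b : Fin m → Bool) (u : ℕ) (hu : u ≤ m - 1) :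
    (u ≤ 1 →
      ∑ a ∈ Finset.univ.filter (fun a : Fin m → Bool => a ≠ fun _ => false),
        bitr (xor (dig m a (m - u)) (dig m a (m + 1 - jfun m a b σ u)))
          * bitr (xor (dig m a (m - u)) (dig m a (m + 1 - jfun m a b (fun j => !(σ j)) u)))
        = (2 : ℝ) ^ m / 2 ^ (u + 1)) ∧
    (2 ≤ u →
      ∑ a ∈ Finset.univ.filter (fun a : Fin m → Bool => a ≠ fun _ => false),
        bitr (xor (dig m a (m - u)) (dig m a (m + 1 - jfun m a b σ u)))
          * bitr (xor (dig m a (m - u)) (dig m a (m + 1 - jfun m a b (fun j => !(σ j)) u)))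
        = (2 : ℝ) ^ m / 2 ^ (u + 1) *
            (1 + ∑ j ∈ Finset.Icc 1 (u - 1), (2 : ℝ) ^ j *
              (bitr (!(xor (dig m b j) (dig m σ j))) * bitr (xor (dig m b u) (dig m σ u))
                + bitr (xor (dig m b j) (dig m σ j)) * bitr (!(xor (dig m b u) (dig m σ u)))))) := by
  classical
  have hzero : ∀ v : ℕ, dig m (fun _ => false) v = false := by
    intro v; rw [dig]; split <;> rfl
  have hfil : ∀ (f : (Fin m → Bool) → ℝ), f (fun _ => false) = 0 →
      ∑ a ∈ Finset.univ.filter (fun a : Fin m → Bool => a ≠ fun _ => false), f a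
        = ∑ a : Fin m → Bool, f a := by
    intro f hf
    rw [Finset.sum_filter]
    refine Finset.sum_congr rfl (fun a _ => ?_)
    by_cases h : a = fun _ => false
    · rw [if_neg (by simp [h]), h, hf]
    · rw [if_pos h]
  have hz : ∀ v : ℕ, (fun a : Fin m → Bool =>
        bitr (xor (dig m a (m - v)) (dig m a (m + 1 - jfun m a b σ v)))
          * bitr (xor (dig m a (m - v)) (dig m a (m + 1 - jfun m a b (fun j => !(σ j)) v))))
        (fun _ => false) = 0 := by
    intro v
    simp only [hzero, Bool.xor_false, bitr_false, mul_zero, zero_mul]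
  constructor
  · -- u ≤ 1
    intro hu1
    refine ((hfil _ (hz u)).trans ?_)
    match u, hu1 with
    | 0, _ =>
      have hsum0 : ∀ a : Fin m → Bool,
          bitr (xor (dig m a (m - 0)) (dig m a (m + 1 - jfun m a b σ 0)))
            * bitr (xor (dig m a (m - 0)) (dig m a (m + 1 - jfun m a b (fun j => !(σ j)) 0)))
          = if (∀ i : Fin m, m - 1 ≤ i.val → i.val ≤ m - 1 → a i = (fun _ : ℕ => true) i.val)
              then (1:ℝ) else 0 := by
        intro a
        have h1 : jfun m a b σ 0 = 0 := rfl
        have h2 : jfun m a b (fun j => !(σ j)) 0 = 0 := rfl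
        have hiff : (∀ i : Fin m, m - 1 ≤ i.val → i.val ≤ m - 1 → a i = (fun _ : ℕ => true) i.val)
            ↔ dig m a (m - 0) = true := by
          constructor
          · intro h
            have hd : dig m a (m - 0) = a ⟨m - 1, by omega⟩ :=
              dig_coord m a _ _ (by omega) (by omega) (by show m - 1 + 1 = m - 0; omega)
            rw [hd]
            exact h ⟨m - 1, by omega⟩ le_rfl le_rfl
          · intro h i hi1 hi2
            have hd : dig m a (m - 0) = a i := dig_coord m a _ i (by omega) (by omega) (by omega)
            rw [← hd, h]
        rw [h1, h2, dig_oob m a (m + 1 - 0) (by omega), if_congr hiff rfl rfl]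
        cases hc : dig m a (m - 0) <;> simp [hc, bitr]
      rw [Finset.sum_congr rfl (fun a _ => hsum0 a), Finset.sum_boole,
        count_interval m (m - 1) (m - 1) le_rfl (by omega) (fun _ => true),
        show m - ((m - 1) - (m - 1) + 1) = m - 1 from by omega]
      push_cast
      rw [eq_div_iff (by positivity), ← pow_add,
        show m - 1 + (0 + 1) = m from by omega]
    | 1, _ =>
      rw [main_count m σ b 1 le_rfl (by omega)]
      rw [show (1:ℕ) - 1 = 0 from rfl, Finset.Icc_eq_empty (by omega), Finset.sum_empty,
        show (2:ℝ) ^ (m - 1 - 1) * (1 + 0) = 2 ^ (m - 1 - 1) from by ring,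
        eq_div_iff (by positivity), ← pow_add,
        show m - 1 - 1 + (1 + 1) = m from by omega]
  · -- 2 ≤ u
    intro hu2
    refine ((hfil _ (hz u)).trans ?_)
    rw [main_count m σ b u (by omega) (by omega)]
    have hpow : (2:ℝ) ^ m / 2 ^ (u + 1) = 2 ^ (m - u - 1) := by
      rw [div_eq_iff (by positivity), ← pow_add, show m - u - 1 + (u + 1) = m from by omega]
    rw [hpow]
    have hsum : ∑ j ∈ Finset.Icc 1 (u - 1), (2:ℝ) ^ j *
          (if xor (dig m b j) (dig m σ j) ≠ xor (dig m b u) (dig m σ u) then 1 else 0)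
        = ∑ j ∈ Finset.Icc 1 (u - 1), (2:ℝ) ^ j *
            (bitr (!(xor (dig m b j) (dig m σ j))) * bitr (xor (dig m b u) (dig m σ u))
              + bitr (xor (dig m b j) (dig m σ j)) * bitr (!(xor (dig m b u) (dig m σ u)))) := by
      refine Finset.sum_congr rfl (fun j _ => ?_)
      cases hx : xor (dig m b j) (dig m σ j) <;> cases hy : xor (dig m b u) (dig m σ u) <;>
        simp [hx, hy, bitr]
    rw [hsum]
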